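/- arXiv:1908.09078 — 2 statements merged into one kernel-verified Lean document; each statement's English description precedes it below -/
import Mathlib

section
/- Let m ≤ n, let f : ℝ^{m×n} → ℝ be any function, let ν > 0, and let κ be a positive integer with κ ≤ m. Suppose X* is a global minimizer of X ↦ ν f(X) + rank(X) over ℝ^{m×n} with rank(X*) = r ≤ κ. Let X* = U* Diag(σ(X*)) V*ᵀ be a singular value decomposition with U* ∈ O^m, V* ∈ O^n, and define R* ∈ ℝ^{m×κ} with columns √σ_j(X*)·U*_j and L* ∈ ℝ^{n×κ} with columns √σ_j(X*)·V*_j for j = 1,…,κ. Then (R*, L*) is a global minimizer of (U,V) ↦ ν f(UVᵀ) + (1/2)(‖U‖_{2,0} + ‖V‖_{2,0}) over ℝ^{m×κ} × ℝ^{n×κ}. -/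
open scoped BigOperators

noncomputable section

namespace Paper

open Matrix

/-- Euclidean dot product on `ℝ^p`. -/
def vdot {p : ℕ} (y z : Fin p → ℝ) : ℝ := ∑ i, y i * z i

/-- Euclidean norm on `ℝ^p`. -/
def vnorm {p : ℕ} (y : Fin p → ℝ) : ℝ := Real.sqrt (∑ i, (y i) ^ 2)

/-- Trace (Frobenius) inner product of matrices. -/
def finner {m n : ℕ} (X Y : Matrix (Fin m) (Fin n) ℝ) : ℝ := ∑ i, ∑ j, X i j * Y i j

/-- Frobenius norm of a matrix. -/
def fnorm {m n : ℕ} (X : Matrix (Fin m) (Fin n) ℝ) : ℝ := Real.sqrt (∑ i, ∑ j, (X i j) ^ 2)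

/-- Euclidean norm of the `j`-th column of a matrix. -/
def colNorm {m k : ℕ} (U : Matrix (Fin m) (Fin k) ℝ) (j : Fin k) : ℝ :=
  Real.sqrt (∑ i, (U i j) ^ 2)

/-- The `ℓ_{2,0}` norm of a matrix: the number of nonzero columns. -/
def l20 {m k : ℕ} (U : Matrix (Fin m) (Fin k) ℝ) : ℕ :=
  Set.ncard {j : Fin k | (fun i => U i j) ≠ 0}

/-- Number of nonzero entries of a vector. -/
def zeroNorm {k : ℕ} (z : Fin k → ℝ) : ℕ := Set.ncard {i : Fin k | z i ≠ 0}

/-- `k`-restricted smallest eigenvalue of `A*A`. -/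
def lamMin {m n p : ℕ} (A : Matrix (Fin m) (Fin n) ℝ →ₗ[ℝ] (Fin p → ℝ)) (k : ℕ) : ℝ :=
  sInf {t : ℝ | ∃ X : Matrix (Fin m) (Fin n) ℝ, X.rank ≤ k ∧ fnorm X = 1 ∧ t = (vnorm (A X)) ^ 2}

/-- `k`-restricted largest eigenvalue of `A*A`. -/
def lamMax {m n p : ℕ} (A : Matrix (Fin m) (Fin n) ℝ →ₗ[ℝ] (Fin p → ℝ)) (k : ℕ) : ℝ :=
  sSup {t : ℝ | ∃ X : Matrix (Fin m) (Fin n) ℝ, X.rank ≤ k ∧ fnorm X = 1 ∧ t = (vnorm (A X)) ^ 2}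

/-- Operator (spectral) norm of the sampling operator. -/
def opNorm {m n p : ℕ} (A : Matrix (Fin m) (Fin n) ℝ →ₗ[ℝ] (Fin p → ℝ)) : ℝ :=
  sSup {t : ℝ | ∃ X : Matrix (Fin m) (Fin n) ℝ, fnorm X = 1 ∧ t = vnorm (A X)}

/-- Spectral norm of a matrix. -/
def specNorm {a b : ℕ} (U : Matrix (Fin a) (Fin b) ℝ) : ℝ :=
  sSup {t : ℝ | ∃ x : Fin b → ℝ, vnorm x = 1 ∧ t = vnorm (U.mulVec x)}

/-- Adjoint of `A` w.r.t. the trace inner product, applied to `y`. -/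
def adjApply {m n p : ℕ} (A : Matrix (Fin m) (Fin n) ℝ →ₗ[ℝ] (Fin p → ℝ))
    (y : Fin p → ℝ) : Matrix (Fin m) (Fin n) ℝ :=
  fun i j => vdot (A (Matrix.single i j 1)) y

/-- `A*A` applied to a matrix. -/
def AstarA {m n p : ℕ} (A : Matrix (Fin m) (Fin n) ℝ →ₗ[ℝ] (Fin p → ℝ))
    (X : Matrix (Fin m) (Fin n) ℝ) : Matrix (Fin m) (Fin n) ℝ :=
  adjApply A (A X)

/-- Singular values of `X` arranged nonincreasingly, `sigmaFin X 0` the largest. -/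
def sigmaFin {m n : ℕ} (X : Matrix (Fin m) (Fin n) ℝ) : Fin m → ℝ := fun j =>
  Real.sqrt ((Matrix.isHermitian_mul_conjTranspose_self X).eigenvalues
    ((Tuple.sort (Matrix.isHermitian_mul_conjTranspose_self X).eigenvalues) j.rev))

/-- The `i`-th largest singular value (1-indexed); `0` for out-of-range indices. -/
def singularValue {m n : ℕ} (i : ℕ) (X : Matrix (Fin m) (Fin n) ℝ) : ℝ :=
  if h : 1 ≤ i ∧ i ≤ m then sigmaFin X ⟨i - 1, by omega⟩ else 0

/-- The family `𝓛` of proper lsc convex functions `φ : ℝ → (−∞,∞]` with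
`[0,1] ⊆ int(dom φ)`, `φ(1) = 1` and `min_{t ∈ [0,1]} φ(t) = 0` attained at `t*`. -/
structure LFamily where
  phi : ℝ → EReal
  lsc : LowerSemicontinuous phi
  convex : ∀ x y a b : ℝ, 0 ≤ a → 0 ≤ b → a + b = 1 →
    phi (a * x + b * y) ≤ (a : EReal) * phi x + (b : EReal) * phi y
  ne_bot : ∀ x, phi x ≠ ⊥
  icc_subset_interior_dom : Set.Icc (0 : ℝ) 1 ⊆ interior {t : ℝ | phi t ≠ ⊤}
  phi_one : phi 1 = 1
  tstar : ℝ
  tstar_mem : tstar ∈ Set.Icc (0 : ℝ) 1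
  phi_tstar : phi tstar = 0
  phi_nonneg : ∀ t ∈ Set.Icc (0 : ℝ) 1, 0 ≤ phi t

/-- Left derivative of `φ` at `1`, as the supremum of difference quotients. -/
def leftDerivOne (L : LFamily) : ℝ :=
  sSup {q : ℝ | ∃ t : ℝ, 0 ≤ t ∧ t < 1 ∧ q = (1 - (L.phi t).toReal) / (1 - t)}

/-- The function `ψ`: equal to `φ` on `[0,1]` and `+∞` elsewhere. -/
def psi (L : LFamily) (t : ℝ) : EReal := if t ∈ Set.Icc (0 : ℝ) 1 then L.phi t else ⊤

/-- The conjugate `ψ*` of `ψ`. -/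
def psiStar (L : LFamily) (s : ℝ) : EReal := ⨆ t : ℝ, ((s * t : ℝ) : EReal) - psi L t


/-- Rectangular diagonal matrix carrying the singular values of `X`. -/
def svDiag {m n : ℕ} (X : Matrix (Fin m) (Fin n) ℝ) : Matrix (Fin m) (Fin n) ℝ :=
  fun i j => if (i : ℕ) = (j : ℕ) then singularValue ((i : ℕ) + 1) X else 0


section AuxLemmas

lemma aux_sv_nonneg {m n : ℕ} (i : ℕ) (X : Matrix (Fin m) (Fin n) ℝ) :
    0 ≤ singularValue i X := by
  unfold singularValue sigmaFin
  split; exacts [Real.sqrt_nonneg _, le_refl 0]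

lemma aux_sv_eq_zero {m n : ℕ} (X : Matrix (Fin m) (Fin n) ℝ) (a : ℕ) (ha : X.rank ≤ a) :
    singularValue (a + 1) X = 0 := by
  classical
  unfold singularValue
  split
  case isFalse => rfl
  case isTrue h =>
    have ham : a < m := by omega
    set H := Matrix.isHermitian_mul_conjTranspose_self X with hH
    set eig := H.eigenvalues with heig
    set p := Tuple.sort eig with hp
    have hmono : Monotone (eig ∘ p) := Tuple.monotone_sort eig
    have hnn : ∀ i, 0 ≤ eig i := fun i =>
      (Matrix.posSemidef_self_mul_conjTranspose X).eigenvalues_nonneg i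
    have hcard : X.rank = Fintype.card {i // eig i ≠ 0} := by
      rw [← Matrix.rank_self_mul_conjTranspose X]
      exact H.rank_eq_card_non_zero_eigs
    set j : Fin m := (⟨a + 1 - 1, by omega⟩ : Fin m) with hj
    show Real.sqrt (eig (p j.rev)) = 0
    have hjr : (j.rev : ℕ) = m - 1 - a := by simp [hj, Fin.rev]; omega
    by_contra hne
    have hpos : 0 < eig (p j.rev) := by
      rcases lt_or_eq_of_le (hnn (p j.rev)) with h' | h'
      · exact h'
      · exact absurd (by rw [← h', Real.sqrt_zero]) hne
    have hsub : Finset.Ici j.rev ⊆ Finset.filter (fun i => eig (p i) ≠ 0) Finset.univ := by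
      intro i hi
      simp only [Finset.mem_filter, Finset.mem_univ, true_and]
      have := hmono (Finset.mem_Ici.mp hi)
      exact ne_of_gt (lt_of_lt_of_le hpos this)
    have hIci : (Finset.Ici j.rev).card = m - (j.rev : ℕ) := Fin.card_Ici j.rev
    have hcard2 : Fintype.card {i // eig (p i) ≠ 0} = Fintype.card {i // eig i ≠ 0} :=
      Fintype.card_congr (p.subtypeEquiv (fun i => Iff.rfl))
    have hfil : (Finset.filter (fun i => eig (p i) ≠ 0) Finset.univ).card
        = Fintype.card {i // eig (p i) ≠ 0} := (Fintype.card_subtype _).symm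
    have hle := Finset.card_le_card hsub
    rw [hIci, hfil, hcard2, ← hcard] at hle
    omega

lemma aux_rank_le_l20 {a k : ℕ} (U : Matrix (Fin a) (Fin k) ℝ) : U.rank ≤ l20 U := by
  classical
  set S : Finset (Fin k) := {j : Fin k | (fun i => U i j) ≠ 0}.toFinset with hS
  have hl20 : l20 U = S.card := Set.ncard_eq_toFinset_card' _
  set T : Finset (Fin a → ℝ) := S.image (fun j => fun i => U i j) with hT
  have hrange : LinearMap.range U.mulVecLin ≤ Submodule.span ℝ (T : Set (Fin a → ℝ)) := by
    rintro y ⟨x, rfl⟩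
    have hy : U.mulVecLin x = ∑ j : Fin k, x j • (fun i => U i j) := by
      funext i
      simp [Matrix.mulVecLin_apply, Matrix.mulVec, dotProduct, Finset.sum_apply, mul_comm]
    rw [hy, ← Finset.sum_subset (Finset.subset_univ S)]
    · exact Submodule.sum_mem _ fun j hj => Submodule.smul_mem _ _
        (Submodule.subset_span (by exact Finset.mem_coe.mpr (Finset.mem_image_of_mem _ hj)))
    · intro j _ hj
      have : (fun i => U i j) = 0 := by
        by_contra h
        exact hj (by simp [hS, Set.mem_toFinset, h])
      rw [this, smul_zero]
  have h1 : U.rank ≤ Module.finrank ℝ (Submodule.span ℝ (T : Set (Fin a → ℝ))) :=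
    Submodule.finrank_mono hrange
  have h2 : Module.finrank ℝ (Submodule.span ℝ (T : Set (Fin a → ℝ))) ≤ T.card :=
    finrank_span_finset_le_card T
  have h3 : T.card ≤ S.card := Finset.card_image_le
  omega

lemma aux_ncard_le {k r : ℕ} (s : Set (Fin k)) (hs : ∀ j ∈ s, (j : ℕ) < r) :
    s.ncard ≤ r := by
  classical
  rw [Set.ncard_eq_toFinset_card']
  calc s.toFinset.card ≤ (Finset.range r).card := by
        refine Finset.card_le_card_of_injOn (fun j => (j : ℕ)) ?_ ?_
        · intro j hj
          rw [Finset.mem_coe, Finset.mem_range]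
          exact hs j (Set.mem_toFinset.mp hj)
        · intro x _ y _ hxy
          exact Fin.ext hxy
    _ = r := Finset.card_range r

end AuxLemmas

/-- a factored pair built from an SVD of a global minimizer of the rank
regularized problem is a global minimizer of the `ℓ_{2,0}` regularized factorization
(first part of Lemma 3.1). -/
theorem factored_global_min_of_rank_reg_min
    {m n : ℕ} (hmn : m ≤ n) (f : Matrix (Fin m) (Fin n) ℝ → ℝ) (ν : ℝ) (hν : 0 < ν)
    (κ : ℕ) (hκ : 1 ≤ κ) (hκm : κ ≤ m)
    (Xstar : Matrix (Fin m) (Fin n) ℝ) (r : ℕ) (hr : Xstar.rank = r) (hrκ : r ≤ κ)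
    (hXmin : ∀ X : Matrix (Fin m) (Fin n) ℝ,
      ν * f Xstar + (Xstar.rank : ℝ) ≤ ν * f X + (X.rank : ℝ))
    (Ustar : Matrix (Fin m) (Fin m) ℝ) (Vstar : Matrix (Fin n) (Fin n) ℝ)
    (hU : Ustarᵀ * Ustar = 1) (hV : Vstarᵀ * Vstar = 1)
    (hSVD : Xstar = Ustar * svDiag Xstar * Vstarᵀ)
    (Rstar : Matrix (Fin m) (Fin κ) ℝ) (Lstar : Matrix (Fin n) (Fin κ) ℝ)
    (hR : ∀ (i : Fin m) (j : Fin κ),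
      Rstar i j = Real.sqrt (singularValue ((j : ℕ) + 1) Xstar) * Ustar i (Fin.castLE hκm j))
    (hL : ∀ (i : Fin n) (j : Fin κ),
      Lstar i j = Real.sqrt (singularValue ((j : ℕ) + 1) Xstar) *
        Vstar i (Fin.castLE (hκm.trans hmn) j)) :
    ∀ (U : Matrix (Fin m) (Fin κ) ℝ) (V : Matrix (Fin n) (Fin κ) ℝ),
      ν * f (Rstar * Lstarᵀ) + (1 / 2) * ((l20 Rstar : ℝ) + (l20 Lstar : ℝ)) ≤
        ν * f (U * Vᵀ) + (1 / 2) * ((l20 U : ℝ) + (l20 V : ℝ)) := by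
  intro U V
  classical
  -- Step 1: Rstar * Lstarᵀ = Xstar
  have hRL : Rstar * Lstarᵀ = Xstar := by
    ext i k
    set G : ℕ → ℝ := fun a =>
      if h : a < m then singularValue (a + 1) Xstar *
        (Ustar i ⟨a, h⟩ * Vstar k ⟨a, lt_of_lt_of_le h hmn⟩) else 0 with hG
    have hL1 : (Rstar * Lstarᵀ) i k = ∑ j : Fin κ, G (j : ℕ) := by
      rw [Matrix.mul_apply]
      refine Finset.sum_congr rfl fun j _ => ?_
      have hjm : (j : ℕ) < m := lt_of_lt_of_le j.2 hκm
      rw [Matrix.transpose_apply, hR, hL, hG]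
      simp only [dif_pos hjm]
      have hsq : Real.sqrt (singularValue ((j : ℕ) + 1) Xstar) *
          Real.sqrt (singularValue ((j : ℕ) + 1) Xstar) = singularValue ((j : ℕ) + 1) Xstar :=
        Real.mul_self_sqrt (aux_sv_nonneg _ _)
      have h1 : Fin.castLE hκm j = (⟨(j : ℕ), hjm⟩ : Fin m) := rfl
      have h2 : Fin.castLE (hκm.trans hmn) j =
          (⟨(j : ℕ), lt_of_lt_of_le hjm hmn⟩ : Fin n) := rfl
      rw [h1, h2, mul_mul_mul_comm, hsq]
    have hR1 : Xstar i k = ∑ a : Fin m, G (a : ℕ) := by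
      conv_lhs => rw [hSVD]
      rw [Matrix.mul_apply]
      have hstep : ∀ b : Fin n, (Ustar * svDiag Xstar) i b * Vstarᵀ b k
          = ∑ a : Fin m, Ustar i a * svDiag Xstar a b * Vstar k b := by
        intro b
        rw [Matrix.mul_apply, Matrix.transpose_apply, Finset.sum_mul]
      simp_rw [hstep]
      rw [Finset.sum_comm]
      refine Finset.sum_congr rfl fun a _ => ?_
      rw [Finset.sum_eq_single (Fin.castLE hmn a)]
      · have hd : svDiag Xstar a (Fin.castLE hmn a) = singularValue ((a : ℕ) + 1) Xstar := by
          simp [svDiag]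
        rw [hd, hG]
        simp only [dif_pos a.2]
        have h1 : (⟨(a : ℕ), a.2⟩ : Fin m) = a := rfl
        have h2 : (⟨(a : ℕ), lt_of_lt_of_le a.2 hmn⟩ : Fin n) = Fin.castLE hmn a := rfl
        rw [h1, h2]
        ring
      · intro b _ hb
        have hne : ¬ ((a : ℕ) = (b : ℕ)) := by
          intro hab
          exact hb (Fin.ext hab.symm)
        have : svDiag Xstar a b = 0 := by simp [svDiag, hne]
        rw [this, mul_zero, zero_mul]
      · intro habs
        exact absurd (Finset.mem_univ _) habs
    have hsum : ∑ j : Fin κ, G (j : ℕ) = ∑ a : Fin m, G (a : ℕ) := by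
      rw [Fin.sum_univ_eq_sum_range G κ, Fin.sum_univ_eq_sum_range G m]
      refine Finset.sum_subset (Finset.range_subset_range.mpr hκm) ?_
      intro a ha has
      have hka : κ ≤ a := by
        simpa [Finset.mem_range, not_lt] using has
      have hra : Xstar.rank ≤ a := by omega
      have hz : singularValue (a + 1) Xstar = 0 := aux_sv_eq_zero Xstar a hra
      rw [hG]
      by_cases h : a < m
      · simp [h, hz]
      · simp [h]
    rw [hL1, hsum, ← hR1]
  -- Step 2: l20 bounds for Rstar, Lstar
  have hcolR : ∀ j : Fin κ, r ≤ (j : ℕ) → (fun i => Rstar i j) = 0 := by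
    intro j hj
    funext i
    have hz : singularValue ((j : ℕ) + 1) Xstar = 0 := aux_sv_eq_zero Xstar _ (hr ▸ hj)
    simp [hR, hz]
  have hcolL : ∀ j : Fin κ, r ≤ (j : ℕ) → (fun i => Lstar i j) = 0 := by
    intro j hj
    funext i
    have hz : singularValue ((j : ℕ) + 1) Xstar = 0 := aux_sv_eq_zero Xstar _ (hr ▸ hj)
    simp [hL, hz]
  have hl20R : l20 Rstar ≤ r := by
    refine aux_ncard_le _ fun j hj => ?_
    by_contra hlt
    push_neg at hlt
    exact hj (hcolR j hlt)
  have hl20L : l20 Lstar ≤ r := by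
    refine aux_ncard_le _ fun j hj => ?_
    by_contra hlt
    push_neg at hlt
    exact hj (hcolL j hlt)
  -- Step 3: rank of U * Vᵀ bounded by half the sum of l20's
  have h1 : (U * Vᵀ).rank ≤ l20 U :=
    le_trans (Matrix.rank_mul_le_left U Vᵀ) (aux_rank_le_l20 U)
  have h2 : (U * Vᵀ).rank ≤ l20 V := by
    have h := Matrix.rank_mul_le_right U Vᵀ
    rw [Matrix.rank_transpose] at h
    exact le_trans h (aux_rank_le_l20 V)
  have h1' : ((U * Vᵀ).rank : ℝ) ≤ (l20 U : ℝ) := Nat.cast_le.mpr h1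
  have h2' : ((U * Vᵀ).rank : ℝ) ≤ (l20 V : ℝ) := Nat.cast_le.mpr h2
  have hl20R' : (l20 Rstar : ℝ) ≤ (r : ℝ) := Nat.cast_le.mpr hl20R
  have hl20L' : (l20 Lstar : ℝ) ≤ (r : ℝ) := Nat.cast_le.mpr hl20L
  have hXr : (Xstar.rank : ℝ) = (r : ℝ) := by rw [hr]
  have hmin := hXmin (U * Vᵀ)
  rw [hRL]
  linarith


end Paper
end
end

section
/- Let m ≤ n, let f : ℝ^{m×n} → ℝ be any function, let ν, μ > 0, and let κ be a positive integer with κ ≤ m. Let 𝒳* denote the set of global minimizers of X ↦ ν f(X) + rank(X) over ℝ^{m×n} and Ω_κ = {X : rank(X) ≤ κ}, and suppose 𝒳* ∩ Ω_κ ≠ ∅. Then the set of global minimizers of Ψ(U,V) = ν f(UVᵀ) + (μ/4)‖UᵀU − VᵀV‖_F² + (1/2)(‖U‖_{2,0} + ‖V‖_{2,0}) over ℝ^{m×κ} × ℝ^{n×κ} equals 𝒲* = {(Ū,V̄) : ŪV̄ᵀ ∈ 𝒳* ∩ Ω_κ, ŪᵀŪ = V̄ᵀV̄, ‖Ū‖_{2,0}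 = ‖V̄‖_{2,0} = rank(ŪV̄ᵀ)}. -/
open scoped BigOperators

noncomputable section

namespace Paper

open Matrix

/-- The objective `Ψ` of the `ℓ_{2,0}`-regularized balanced factorization. -/
def Psi {m n κ : ℕ} (f : Matrix (Fin m) (Fin n) ℝ → ℝ) (ν μ : ℝ)
    (U : Matrix (Fin m) (Fin κ) ℝ) (V : Matrix (Fin n) (Fin κ) ℝ) : ℝ :=
  ν * f (U * Vᵀ) + (μ / 4) * (fnorm (Uᵀ * U - Vᵀ * V)) ^ 2 +
    (1 / 2) * ((l20 U : ℝ) + (l20 V : ℝ))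

lemma sum_extend_eq {α β M : Type*} [Fintype α] [Fintype β] [AddCommMonoid M]
    (e : α ↪ β) (G : β → M) (h0 : ∀ j, (∀ s, e s ≠ j) → G j = 0) :
    ∑ j, G j = ∑ s, G (e s) := by
  classical
  rw [← Finset.sum_map Finset.univ e G]
  exact (Finset.sum_subset (Finset.subset_univ _) (fun j _ hj =>
    h0 j (fun s hs => hj (Finset.mem_map.mpr ⟨s, Finset.mem_univ s, hs⟩)))).symm

lemma rank_le_l20 {m κ : ℕ} (U : Matrix (Fin m) (Fin κ) ℝ) : U.rank ≤ l20 U := by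
  classical
  set S : Set (Fin κ) := {j | (fun i => U i j) ≠ 0} with hS
  haveI : Fintype ↥S := Fintype.ofFinite _
  have hfac : U = (Matrix.of fun i (s : S) => U i (s : Fin κ)) *
      (Matrix.of fun (s : S) j => if (s : Fin κ) = j then (1:ℝ) else 0) := by
    ext i j
    rw [Matrix.mul_apply]
    by_cases hj : j ∈ S
    · rw [Finset.sum_eq_single (⟨j, hj⟩ : S)]
      · simp
      · intro b _ hb
        simp only [Matrix.of_apply]
        rw [if_neg, mul_zero]
        intro hbj; exact hb (Subtype.ext hbj)
      · intro h; exact absurd (Finset.mem_univ _) h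
    · have hz : (fun i => U i j) = 0 := by
        by_contra h; exact hj h
      have : U i j = 0 := congrFun hz i
      rw [this]
      refine (Finset.sum_eq_zero ?_).symm
      intro s _
      simp only [Matrix.of_apply]
      rw [if_neg, mul_zero]
      intro hsj; exact hj (hsj ▸ s.2)
  have h1 : U.rank ≤ Fintype.card ↥S := by
    conv_lhs => rw [hfac]
    exact (Matrix.rank_mul_le_left _ _).trans (Matrix.rank_le_card_width _)
  have h2 : Fintype.card ↥S = S.ncard := by
    rw [← Nat.card_coe_set_eq, Nat.card_eq_fintype_card]
  rw [l20, ← hS, ← h2]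
  exact h1

lemma l20_le {m κ : ℕ} (U : Matrix (Fin m) (Fin κ) ℝ) : l20 U ≤ κ := by
  have := Set.ncard_le_ncard (Set.subset_univ {j : Fin κ | (fun i => U i j) ≠ 0})
    Set.finite_univ
  simpa [l20, Set.ncard_univ] using this

lemma fnorm_eq_zero {m n : ℕ} {X : Matrix (Fin m) (Fin n) ℝ} (h : fnorm X = 0) : X = 0 := by
  have hnn : 0 ≤ ∑ i, ∑ j, (X i j)^2 :=
    Finset.sum_nonneg fun i _ => Finset.sum_nonneg fun j _ => sq_nonneg _
  have hs : ∑ i, ∑ j, (X i j)^2 = 0 := (Real.sqrt_eq_zero hnn).mp h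
  ext i j
  have h1 := (Finset.sum_eq_zero_iff_of_nonneg
    (fun i _ => Finset.sum_nonneg fun j _ => sq_nonneg (X i j))).mp hs i (Finset.mem_univ i)
  have h2 := (Finset.sum_eq_zero_iff_of_nonneg (fun j _ => sq_nonneg (X i j))).mp h1 j
    (Finset.mem_univ j)
  simpa using pow_eq_zero_iff (n := 2) (by norm_num) |>.mp h2


lemma exists_balanced_factorization {m n κ : ℕ} (X : Matrix (Fin m) (Fin n) ℝ)
    (hκ : X.rank ≤ κ) :
    ∃ (U : Matrix (Fin m) (Fin κ) ℝ) (V : Matrix (Fin n) (Fin κ) ℝ),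
      U * Vᵀ = X ∧ Uᵀ * U = Vᵀ * V ∧ l20 U = X.rank ∧ l20 V = X.rank := by
  classical
  have hH : (Xᵀ * X).IsHermitian := by
    simpa [Matrix.conjTranspose_eq_transpose_of_trivial] using isHermitian_conjTranspose_mul_self X
  set P := (hH.eigenvectorUnitary : Matrix (Fin n) (Fin n) ℝ) with hPdef
  set μ := hH.eigenvalues with hμdef
  set p : Fin n → (Fin n → ℝ) := fun t => (fun i => P i t) with hpdef
  -- eigen-equation
  have hHP : (Xᵀ * X) * P = P * diagonal μ := by
    have hd : diagonal (RCLike.ofReal ∘ μ) = diagonal μ := by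
      ext i j; simp [diagonal]
    calc (Xᵀ * X) * P = (P * diagonal μ * star P) * P := by
          rw [← hd]; conv_lhs => rw [hH.spectral_theorem, Unitary.conjStarAlgAut_apply]
      _ = P * diagonal μ * (star P * P) := by rw [mul_assoc]
      _ = P * diagonal μ := by rw [Unitary.coe_star_mul_self, mul_one]
  have hcol : ∀ t, (Xᵀ * X) *ᵥ p t = μ t • p t := by
    intro t; funext i
    have h := congrFun (congrFun hHP i) t
    rw [Matrix.mul_apply, Matrix.mul_diagonal] at h
    simp only [Matrix.mulVec, dotProduct, Pi.smul_apply, smul_eq_mul, hpdef]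
    simpa [mul_comm] using h
  -- orthonormality of columns
  have horth : ∀ t t', p t ⬝ᵥ p t' = if t = t' then (1:ℝ) else 0 := by
    intro t t'
    have h := Unitary.coe_star_mul_self hH.eigenvectorUnitary
    have := congrFun (congrFun h t) t'
    simpa [Matrix.mul_apply, Matrix.one_apply, Matrix.star_apply, dotProduct,
      hpdef, hPdef] using this
  have hcomplete : ∀ a l, ∑ t, P a t * P l t = if a = l then (1:ℝ) else 0 := by
    intro a l
    have h := Unitary.coe_mul_star_self hH.eigenvectorUnitary
    have := congrFun (congrFun h a) l
    simpa [Matrix.mul_apply, Matrix.one_apply, Matrix.star_apply, mul_comm, hPdef] using this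
  -- nonnegativity of eigenvalues
  have hμnn : ∀ t, 0 ≤ μ t := by
    intro t
    have hps : (Xᵀ * X).PosSemidef := by
      have h := Matrix.posSemidef_conjTranspose_mul_self X
      have hct : Xᴴ = Xᵀ := by ext i j; simp [Matrix.conjTranspose_apply]
      rwa [hct] at h
    exact hps.eigenvalues_nonneg t
  -- inner products of images
  have hXP : ∀ t t', (X *ᵥ p t) ⬝ᵥ (X *ᵥ p t') = μ t' * (if t = t' then 1 else 0) := by
    intro t t'
    have h1 : (X *ᵥ p t) ⬝ᵥ (X *ᵥ p t') = p t ⬝ᵥ ((Xᵀ * X) *ᵥ p t') := by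
      conv_rhs => rw [← Matrix.mulVec_mulVec, Matrix.dotProduct_mulVec, Matrix.vecMul_transpose]
    rw [h1, hcol t', dotProduct_smul, horth, smul_eq_mul]
  have hXP0 : ∀ t, μ t = 0 → X *ᵥ p t = 0 := by
    intro t ht
    have := hXP t t
    rw [ht, zero_mul] at this
    exact dotProduct_self_eq_zero.mp this
  -- cardinality and embedding
  have hcard : Fintype.card {t // μ t ≠ 0} = X.rank := by
    rw [← hH.rank_eq_card_non_zero_eigs, Matrix.rank_transpose_mul_self]
  have hcardκ : Fintype.card {t // μ t ≠ 0} ≤ κ := hcard ▸ hκ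
  let e : {t // μ t ≠ 0} ↪ Fin κ :=
    (Fintype.equivFin _).toEmbedding.trans (Fin.castLEEmb hcardκ)
  have hμpos : ∀ s : {t // μ t ≠ 0}, 0 < μ (s : Fin n) :=
    fun s => lt_of_le_of_ne (hμnn s) (Ne.symm s.2)
  set c : {t // μ t ≠ 0} → ℝ := fun s => Real.sqrt (Real.sqrt (μ (s : Fin n))) with hcdef
  have hcpos : ∀ s, 0 < c s := fun s => Real.sqrt_pos.2 (Real.sqrt_pos.2 (hμpos s))
  have hc2 : ∀ s, c s * c s = Real.sqrt (μ (s : Fin n)) :=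
    fun s => Real.mul_self_sqrt (Real.sqrt_nonneg _)
  have hs2 : ∀ s : {t // μ t ≠ 0}, Real.sqrt (μ (s : Fin n)) * Real.sqrt (μ (s : Fin n)) = μ (s : Fin n) :=
    fun s => Real.mul_self_sqrt (hμnn s)
  set Ucol : Fin κ → (Fin m → ℝ) :=
    Function.extend e (fun s => (c s)⁻¹ • (X *ᵥ p (s : Fin n))) 0 with hUcol
  set Vcol : Fin κ → (Fin n → ℝ) :=
    Function.extend e (fun s => (c s) • p (s : Fin n)) 0 with hVcol
  have hUapp : ∀ s, Ucol (e s) = (c s)⁻¹ • (X *ᵥ p (s : Fin n)) :=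
    fun s => e.injective.extend_apply _ _ s
  have hVapp : ∀ s, Vcol (e s) = (c s) • p (s : Fin n) :=
    fun s => e.injective.extend_apply _ _ s
  have hUoff : ∀ j, (∀ s, e s ≠ j) → Ucol j = 0 := by
    intro j hj
    rw [hUcol, Function.extend_apply' _ _ _ (fun ⟨s, hs⟩ => hj s hs)]
    rfl
  have hVoff : ∀ j, (∀ s, e s ≠ j) → Vcol j = 0 := by
    intro j hj
    rw [hVcol, Function.extend_apply' _ _ _ (fun ⟨s, hs⟩ => hj s hs)]
    rfl
  -- helper for sums over the embedded index set
  have sum_ext : ∀ {M : Type} [inst : AddCommMonoid M] (G : Fin κ → M),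
      (∀ j, (∀ s, e s ≠ j) → G j = 0) → ∑ j, G j = ∑ s, G (e s) := by
    intro M inst G h0
    rw [← Finset.sum_map Finset.univ e G]
    exact (Finset.sum_subset (Finset.subset_univ _) (fun j _ hj =>
      h0 j (fun s hs => hj (Finset.mem_map.mpr ⟨s, Finset.mem_univ s, hs⟩)))).symm
  refine ⟨Matrix.of (fun i j => Ucol j i), Matrix.of (fun i j => Vcol j i), ?_, ?_, ?_, ?_⟩
  · -- U * Vᵀ = X
    ext i l
    rw [Matrix.mul_apply]
    have step1 : ∑ j, Ucol j i * Vcol j l = ∑ s, Ucol (e s) i * Vcol (e s) l := by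
      apply sum_ext
      intro j hj
      rw [hVoff j hj]
      simp
    have step2 : ∀ s : {t // μ t ≠ 0}, Ucol (e s) i * Vcol (e s) l
        = (X *ᵥ p (s : Fin n)) i * p (s : Fin n) l := by
      intro s
      rw [hUapp, hVapp]
      simp only [Pi.smul_apply, smul_eq_mul]
      rw [show ((c s)⁻¹ * (X *ᵥ p (s : Fin n)) i) * (c s * p (s : Fin n) l)
          = ((c s)⁻¹ * c s) * ((X *ᵥ p (s : Fin n)) i * p (s : Fin n) l) from by ring,
        inv_mul_cancel₀ (hcpos s).ne', one_mul]
    have step3 : ∑ s : {t // μ t ≠ 0}, (X *ᵥ p (s : Fin n)) i * p (s : Fin n) l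
        = ∑ t, (X *ᵥ p t) i * p t l := by
      rw [← Finset.sum_subtype (Finset.univ.filter (fun t => μ t ≠ 0))
        (by simp) (fun t => (X *ᵥ p t) i * p t l)]
      refine Finset.sum_subset (Finset.filter_subset _ _) ?_
      intro t _ ht
      have hμt : μ t = 0 := by
        by_contra h
        exact ht (Finset.mem_filter.mpr ⟨Finset.mem_univ t, h⟩)
      rw [hXP0 t hμt]
      simp
    have step4 : ∑ t, (X *ᵥ p t) i * p t l = X i l := by
      have expand : ∀ t, (X *ᵥ p t) i * p t l = ∑ a, X i a * (P a t * P l t) := by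
        intro t
        simp only [Matrix.mulVec, dotProduct, Finset.sum_mul, hpdef]
        exact Finset.sum_congr rfl (fun a _ => by ring)
      rw [Finset.sum_congr rfl (fun t _ => expand t), Finset.sum_comm]
      have hrow : ∀ a, ∑ t, X i a * (P a t * P l t) = X i a * (if a = l then (1:ℝ) else 0) := by
        intro a
        rw [← Finset.mul_sum, hcomplete]
      rw [Finset.sum_congr rfl (fun a _ => hrow a)]
      simp
    calc ∑ j, (Matrix.of fun i j => Ucol j i) i j * (Matrix.of fun i j => Vcol j i)ᵀ j l
        = ∑ j, Ucol j i * Vcol j l := rfl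
      _ = ∑ s, Ucol (e s) i * Vcol (e s) l := step1
      _ = ∑ s : {t // μ t ≠ 0}, (X *ᵥ p (s : Fin n)) i * p (s : Fin n) l :=
          Finset.sum_congr rfl (fun s _ => step2 s)
      _ = ∑ t, (X *ᵥ p t) i * p t l := step3
      _ = X i l := step4
  · -- UᵀU = VᵀV
    ext j j'
    show ∑ i, Ucol j i * Ucol j' i = ∑ i, Vcol j i * Vcol j' i
    by_cases hj : ∃ s, e s = j
    · by_cases hj' : ∃ s, e s = j'
      · obtain ⟨s, rfl⟩ := hj
        obtain ⟨s', rfl⟩ := hj'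
        have hL : ∑ i, Ucol (e s) i * Ucol (e s') i = Ucol (e s) ⬝ᵥ Ucol (e s') := rfl
        have hR : ∑ i, Vcol (e s) i * Vcol (e s') i = Vcol (e s) ⬝ᵥ Vcol (e s') := rfl
        rw [hL, hR, hUapp, hVapp, hUapp, hVapp]
        rw [smul_dotProduct, dotProduct_smul,
          smul_dotProduct, dotProduct_smul, hXP, horth]
        simp only [smul_eq_mul]
        by_cases hss : s = s'
        · subst hss
          rw [if_pos rfl, mul_one, mul_one]
          have h4 : μ (s : Fin n) = (c s * c s) * (c s * c s) := by
            rw [hc2]; exact (hs2 s).symm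
          have hne : c s ≠ 0 := (hcpos s).ne'
          rw [h4]
          field_simp
        · have hss' : (s : Fin n) ≠ (s' : Fin n) := fun h => hss (Subtype.ext h)
          rw [if_neg hss']
          ring
      · have h0 : Ucol j' = 0 := hUoff j' (fun s hs => hj' ⟨s, hs⟩)
        have h0' : Vcol j' = 0 := hVoff j' (fun s hs => hj' ⟨s, hs⟩)
        simp [h0, h0']
    · have h0 : Ucol j = 0 := hUoff j (fun s hs => hj ⟨s, hs⟩)
      have h0' : Vcol j = 0 := hVoff j (fun s hs => hj ⟨s, hs⟩)
      simp [h0, h0']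
  · -- l20 U = rank
    have hset : {j : Fin κ | (fun i => (Matrix.of fun i j => Ucol j i) i j) ≠ 0}
        = Set.range e := by
      ext j
      simp only [Set.mem_setOf_eq, Set.mem_range, Matrix.of_apply]
      constructor
      · intro hne
        by_contra h
        push_neg at h
        exact hne (by rw [show (fun i => Ucol j i) = Ucol j from rfl, hUoff j h])
      · rintro ⟨s, rfl⟩
        rw [show (fun i => Ucol (e s) i) = Ucol (e s) from rfl, hUapp]
        intro h0
        have hw : X *ᵥ p (s : Fin n) = 0 := by
          rcases smul_eq_zero.mp h0 with h | h
          · exact absurd h (inv_ne_zero (hcpos s).ne')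
          · exact h
        have := hXP s s
        rw [hw, if_pos rfl, mul_one] at this
        simp only [zero_dotProduct] at this
        exact (hμpos s).ne this
    rw [l20, hset, ← Nat.card_coe_set_eq, Nat.card_range_of_injective e.injective,
      Nat.card_eq_fintype_card, hcard]
  · -- l20 V = rank
    have hset : {j : Fin κ | (fun i => (Matrix.of fun i j => Vcol j i) i j) ≠ 0}
        = Set.range e := by
      ext j
      simp only [Set.mem_setOf_eq, Set.mem_range, Matrix.of_apply]
      constructor
      · intro hne
        by_contra h
        push_neg at h
        exact hne (by rw [show (fun i => Vcol j i) = Vcol j from rfl, hVoff j h])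
      · rintro ⟨s, rfl⟩
        rw [show (fun i => Vcol (e s) i) = Vcol (e s) from rfl, hVapp]
        intro h0
        have hp : p (s : Fin n) = 0 := by
          rcases smul_eq_zero.mp h0 with h | h
          · exact absurd h (hcpos s).ne'
          · exact h
        have := horth (s : Fin n) (s : Fin n)
        rw [hp, if_pos rfl] at this
        simp only [zero_dotProduct] at this
        exact one_ne_zero this.symm
    rw [l20, hset, ← Nat.card_coe_set_eq, Nat.card_range_of_injective e.injective,
      Nat.card_eq_fintype_card, hcard]


lemma psi_lower {m n κ : ℕ} (f : Matrix (Fin m) (Fin n) ℝ → ℝ) (ν μ : ℝ)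
    (hμ : 0 ≤ μ) (U : Matrix (Fin m) (Fin κ) ℝ) (V : Matrix (Fin n) (Fin κ) ℝ) :
    ν * f (U * Vᵀ) + (((U * Vᵀ).rank : ℝ)) ≤ Psi f ν μ U V := by
  have h1 : 0 ≤ (μ/4) * (fnorm (Uᵀ*U - Vᵀ*V))^2 := mul_nonneg (by linarith) (sq_nonneg _)
  have ha : ((U*Vᵀ).rank : ℝ) ≤ (l20 U : ℝ) := by
    exact_mod_cast (Matrix.rank_mul_le_left U Vᵀ).trans (rank_le_l20 U)
  have hb : ((U*Vᵀ).rank : ℝ) ≤ (l20 V : ℝ) := by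
    have h2 : (U*Vᵀ).rank ≤ V.rank := by
      have := Matrix.rank_mul_le_right U Vᵀ
      rwa [Matrix.rank_transpose] at this
    exact_mod_cast h2.trans (rank_le_l20 V)
  unfold Psi
  linarith

lemma psi_eq {m n κ : ℕ} (f : Matrix (Fin m) (Fin n) ℝ → ℝ) (ν μ : ℝ)
    (U : Matrix (Fin m) (Fin κ) ℝ) (V : Matrix (Fin n) (Fin κ) ℝ)
    (hbal : Uᵀ * U = Vᵀ * V) (hU : l20 U = (U * Vᵀ).rank) (hV : l20 V = (U * Vᵀ).rank) :
    Psi f ν μ U V = ν * f (U * Vᵀ) + (((U * Vᵀ).rank : ℝ)) := by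
  unfold Psi
  rw [hbal, sub_self, hU, hV]
  have h0 : fnorm (0 : Matrix (Fin κ) (Fin κ) ℝ) = 0 := by simp [fnorm]
  rw [h0]
  ring

/-- the set of global minimizers of `Ψ` equals `𝒲*` (Lemma 3.2). -/
theorem global_min_set_of_Psi
    {m n : ℕ} (hmn : m ≤ n) (f : Matrix (Fin m) (Fin n) ℝ → ℝ) (ν μ : ℝ)
    (hν : 0 < ν) (hμ : 0 < μ) (κ : ℕ) (hκ : 1 ≤ κ) (hκm : κ ≤ m)
    (hne : ∃ X0 : Matrix (Fin m) (Fin n) ℝ,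
      (∀ X : Matrix (Fin m) (Fin n) ℝ,
        ν * f X0 + (X0.rank : ℝ) ≤ ν * f X + (X.rank : ℝ)) ∧ X0.rank ≤ κ) :
    {q : Matrix (Fin m) (Fin κ) ℝ × Matrix (Fin n) (Fin κ) ℝ |
        ∀ (U : Matrix (Fin m) (Fin κ) ℝ) (V : Matrix (Fin n) (Fin κ) ℝ),
          Psi f ν μ q.1 q.2 ≤ Psi f ν μ U V} =
    {q : Matrix (Fin m) (Fin κ) ℝ × Matrix (Fin n) (Fin κ) ℝ |
        (∀ X : Matrix (Fin m) (Fin n) ℝ,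
          ν * f (q.1 * q.2ᵀ) + ((q.1 * q.2ᵀ).rank : ℝ) ≤ ν * f X + (X.rank : ℝ)) ∧
        (q.1 * q.2ᵀ).rank ≤ κ ∧ q.1ᵀ * q.1 = q.2ᵀ * q.2 ∧
        l20 q.1 = (q.1 * q.2ᵀ).rank ∧ l20 q.2 = (q.1 * q.2ᵀ).rank} := by
  classical
  obtain ⟨X0, hX0min, hX0rank⟩ := hne
  obtain ⟨U0, V0, hUV0, hbal0, hl0U, hl0V⟩ := exists_balanced_factorization X0 hX0rank
  have hPsi0 : Psi f ν μ U0 V0 = ν * f X0 + (X0.rank : ℝ) := by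
    rw [psi_eq f ν μ U0 V0 hbal0 (by rw [hUV0]; exact hl0U) (by rw [hUV0]; exact hl0V), hUV0]
  ext q
  simp only [Set.mem_setOf_eq]
  constructor
  · intro hq
    have hlow := psi_lower f ν μ hμ.le q.1 q.2
    have hup : Psi f ν μ q.1 q.2 ≤ ν * f X0 + (X0.rank : ℝ) := hPsi0 ▸ hq U0 V0
    have hQopt := hX0min (q.1 * q.2ᵀ)
    have hpen : 0 ≤ (μ/4) * (fnorm (q.1ᵀ*q.1 - q.2ᵀ*q.2))^2 :=
      mul_nonneg (by linarith) (sq_nonneg _)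
    have ha : ((q.1*q.2ᵀ).rank : ℝ) ≤ (l20 q.1 : ℝ) := by
      exact_mod_cast (Matrix.rank_mul_le_left q.1 q.2ᵀ).trans (rank_le_l20 q.1)
    have hb : ((q.1*q.2ᵀ).rank : ℝ) ≤ (l20 q.2 : ℝ) := by
      have h2 : (q.1*q.2ᵀ).rank ≤ q.2.rank := by
        have := Matrix.rank_mul_le_right q.1 q.2ᵀ
        rwa [Matrix.rank_transpose] at this
      exact_mod_cast h2.trans (rank_le_l20 q.2)
    have hPsidef : Psi f ν μ q.1 q.2 = ν * f (q.1*q.2ᵀ)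
        + (μ/4) * (fnorm (q.1ᵀ*q.1 - q.2ᵀ*q.2))^2
        + (1/2) * ((l20 q.1 : ℝ) + (l20 q.2 : ℝ)) := rfl
    rw [hPsidef] at hup
    have hpen0 : (μ/4) * (fnorm (q.1ᵀ*q.1 - q.2ᵀ*q.2))^2 = 0 :=
      le_antisymm (by linarith) hpen
    have hbal : q.1ᵀ * q.1 = q.2ᵀ * q.2 := by
      have hμ4 : (μ/4 : ℝ) ≠ 0 := by positivity
      have hf2 : (fnorm (q.1ᵀ*q.1 - q.2ᵀ*q.2))^2 = 0 :=
        (mul_eq_zero.mp hpen0).resolve_left hμ4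
      have hf : fnorm (q.1ᵀ*q.1 - q.2ᵀ*q.2) = 0 :=
        (pow_eq_zero_iff (two_ne_zero)).mp hf2
      exact sub_eq_zero.mp (fnorm_eq_zero hf)
    have haeq : (l20 q.1 : ℝ) = ((q.1*q.2ᵀ).rank : ℝ) := by linarith
    have hbeq : (l20 q.2 : ℝ) = ((q.1*q.2ᵀ).rank : ℝ) := by linarith
    refine ⟨fun X => ?_, ?_, hbal, ?_, ?_⟩
    · have h1 : ν * f (q.1*q.2ᵀ) + ((q.1*q.2ᵀ).rank : ℝ) ≤ ν * f X0 + (X0.rank : ℝ) := by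
        linarith
      exact h1.trans (hX0min X)
    · exact le_trans ((Matrix.rank_mul_le_left q.1 q.2ᵀ).trans (rank_le_l20 q.1)) (l20_le q.1)
    · exact_mod_cast haeq
    · exact_mod_cast hbeq
  · rintro ⟨hqmin, hqrank, hqbal, hqU, hqV⟩
    intro U V
    have h1 : Psi f ν μ q.1 q.2 = ν * f (q.1*q.2ᵀ) + ((q.1*q.2ᵀ).rank : ℝ) :=
      psi_eq f ν μ q.1 q.2 hqbal hqU hqV
    have h2 := hqmin (U * Vᵀ)
    have h3 := psi_lower f ν μ hμ.le U V
    rw [h1]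
    linarith

end Paper
end
end
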